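/- Let f : (0,∞) → ℝ be non-decreasing and concave, p̂ ∈ Δ(V) with p̂_1 ≥ … ≥ p̂_d > 0, and 0 < ε < p̂_d. Then for every q ∈ Δ(V), the minimum over p ∈ N(p̂) of Σ_i q_i f(p_i) equals Σ_i q_i f(p̂_i) − max_{i ≠ j} { q_i g⁻(p̂_i) − q_j g⁺(p̂_j) }, where g⁻(x) = f(x) − f(x − ε) and g⁺(x) = f(x + ε) − f(x). -/

import Mathlib

open Finset

def simplex (d : ℕ) : Set (Fin d → ℝ) := {p | (∀ i, 0 ≤ p i) ∧ ∑ i, p i = 1}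

noncomputable def dTV {d : ℕ} (p q : Fin d → ℝ) : ℝ := (∑ i, |p i - q i|) / 2

def nbhd {d : ℕ} (phat : Fin d → ℝ) (ε : ℝ) : Set (Fin d → ℝ) :=
  {p | p ∈ simplex d ∧ dTV p phat ≤ ε}

set_option maxHeartbeats 1000000 in
/-- closed form of the inner minimization in the small-budget case
`0 < ε < p̂_d` (the minimum is attained, and it equals the regularized value). -/
theorem stmt5 {d : ℕ} (hd : 2 ≤ d) (f : ℝ → ℝ)
    (hmono : MonotoneOn f (Set.Ioi 0))
    (hconc : ConcaveOn ℝ (Set.Ioi 0) f)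
    (phat : Fin d → ℝ)
    (hmem : phat ∈ simplex d)
    (hpos : ∀ i, 0 < phat i)
    (hsort : ∀ i j : Fin d, i ≤ j → phat j ≤ phat i)
    (ε : ℝ) (hε : 0 < ε) (hεd : ε < phat ⟨d - 1, by omega⟩)
    (q : Fin d → ℝ) (hq : q ∈ simplex d) :
    IsLeast {y : ℝ | ∃ p ∈ nbhd phat ε, y = ∑ i, q i * f (p i)}
      ((∑ i, q i * f (phat i))
        - sSup {x : ℝ | ∃ i j : Fin d, i ≠ j ∧
            x = q i * (f (phat i) - f (phat i - ε))
              - q j * (f (phat j + ε) - f (phat j))}) := by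
  have hq0 : ∀ i, 0 ≤ q i := hq.1
  -- every coordinate of phat exceeds ε
  have hεlt : ∀ i, ε < phat i := by
    intro i
    refine lt_of_lt_of_le hεd (hsort i ⟨d - 1, by omega⟩ ?_)
    rw [Fin.le_def]
    have := i.isLt
    simp only [Fin.val_mk]
    omega
  have hmemlo : ∀ i, phat i - ε ∈ Set.Ioi (0:ℝ) := fun i => by
    simp [Set.mem_Ioi]; linarith [hεlt i]
  have hmemmid : ∀ i, phat i ∈ Set.Ioi (0:ℝ) := fun i => hpos i
  have hmemhi : ∀ i, phat i + ε ∈ Set.Ioi (0:ℝ) := fun i => by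
    simp [Set.mem_Ioi]; linarith [hpos i]
  set glo : Fin d → ℝ := fun i => f (phat i) - f (phat i - ε) with hglo
  set ghi : Fin d → ℝ := fun j => f (phat j + ε) - f (phat j) with hghi
  set S : Set ℝ := {x : ℝ | ∃ i j : Fin d, i ≠ j ∧
      x = q i * (f (phat i) - f (phat i - ε))
        - q j * (f (phat j + ε) - f (phat j))} with hS
  have hSform : S = {x : ℝ | ∃ i j : Fin d, i ≠ j ∧ x = q i * glo i - q j * ghi j} := rfl
  have hSfin : S.Finite := by
    apply Set.Finite.subset
      (Set.finite_range (fun ij : Fin d × Fin d => q ij.1 * glo ij.1 - q ij.2 * ghi ij.2))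
    rintro x ⟨i, j, -, rfl⟩
    exact ⟨(i, j), rfl⟩
  haveI : Nontrivial (Fin d) := Fin.nontrivial_iff_two_le.mpr hd
  have hSne : S.Nonempty := by
    obtain ⟨j, hj⟩ := exists_ne (⟨0, by omega⟩ : Fin d)
    exact ⟨_, ⟨0, by omega⟩, j, (Ne.symm hj), rfl⟩
  have hbdd : BddAbove S := hSfin.bddAbove
  set M : ℝ := sSup S with hM
  have hMub : ∀ i j : Fin d, i ≠ j → q i * glo i - q j * ghi j ≤ M := by
    intro i j hij
    exact le_csSup hbdd ⟨i, j, hij, rfl⟩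
  have hMmem : M ∈ S := hSne.csSup_mem hSfin
  -- g⁺ ≤ g⁻ pointwise
  have hgle : ∀ i, ghi i ≤ glo i := by
    intro i
    have h := hconc.2 (hmemlo i) (hmemhi i) (by norm_num : (0:ℝ) ≤ 1/2)
      (by norm_num : (0:ℝ) ≤ 1/2) (by norm_num)
    have harg : (1/2 : ℝ) • (phat i - ε) + (1/2 : ℝ) • (phat i + ε) = phat i := by
      simp [smul_eq_mul]; ring
    rw [harg] at h
    simp only [smul_eq_mul] at h
    simp only [hglo, hghi]
    linarith
  have hglo0 : ∀ i, 0 ≤ glo i := fun i =>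
    sub_nonneg.2 (hmono (hmemlo i) (hmemmid i) (by linarith [hε]))
  have hghi0 : ∀ i, 0 ≤ ghi i := fun i =>
    sub_nonneg.2 (hmono (hmemmid i) (hmemhi i) (by linarith [hε]))
  have hM0 : 0 ≤ M := by
    obtain ⟨i, -, hi⟩ := Finset.exists_max_image univ (fun i => q i * glo i)
      ⟨⟨0, by omega⟩, mem_univ _⟩
    obtain ⟨j, hj⟩ := exists_ne i
    have h1 : q j * ghi j ≤ q j * glo j := mul_le_mul_of_nonneg_left (hgle j) (hq0 j)
    have h2 : q j * glo j ≤ q i * glo i := hi j (mem_univ _)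
    have := hMub i j (Ne.symm hj)
    linarith
  constructor
  · -- membership: the perturbation attaining the max realizes the value
    obtain ⟨i₀, j₀, hij, hx⟩ := hMmem
    set p : Fin d → ℝ := fun k =>
      if k = i₀ then phat k - ε else if k = j₀ then phat k + ε else phat k with hp
    have hpi : p i₀ = phat i₀ - ε := by simp [hp]
    have hpj : p j₀ = phat j₀ + ε := by
      simp [hp, Ne.symm hij]
    have hpo : ∀ k, k ≠ i₀ → k ≠ j₀ → p k = phat k := by
      intro k h1 h2; simp [hp, h1, h2]
    refine ⟨p, ⟨⟨fun k => ?_, ?_⟩, ?_⟩, ?_⟩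
    · -- nonneg
      by_cases h1 : k = i₀
      · subst h1; rw [hpi]; linarith [hεlt k]
      · by_cases h2 : k = j₀
        · subst h2; rw [hpj]; linarith [hpos k, hε]
        · rw [hpo k h1 h2]; exact (hpos k).le
    · -- sums to one
      have hpk : ∀ k, p k
          = phat k + ((if k = i₀ then -ε else 0) + (if k = j₀ then ε else 0)) := by
        intro k
        by_cases h1 : k = i₀
        · subst h1; rw [hpi, if_pos rfl, if_neg hij]; ring
        · by_cases h2 : k = j₀
          · subst h2; rw [hpj, if_neg h1, if_pos rfl]; ring
          · rw [hpo k h1 h2, if_neg h1, if_neg h2]; ring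
      simp only [hpk, Finset.sum_add_distrib, Finset.sum_ite_eq', mem_univ, if_pos]
      rw [hmem.2]; ring
    · -- distance
      have habs : ∀ k, |p k - phat k|
          = (if k = i₀ then ε else 0) + (if k = j₀ then ε else 0) := by
        intro k
        by_cases h1 : k = i₀
        · subst h1
          rw [hpi, if_pos rfl, if_neg hij]
          rw [show phat k - ε - phat k = -ε by ring, abs_neg, abs_of_pos hε]; ring
        · by_cases h2 : k = j₀
          · subst h2
            rw [hpj, if_neg h1, if_pos rfl]
            rw [show phat k + ε - phat k = ε by ring, abs_of_pos hε]; ring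
          · rw [hpo k h1 h2, if_neg h1, if_neg h2]; simp
      rw [dTV]
      simp only [habs, Finset.sum_add_distrib, Finset.sum_ite_eq', mem_univ, if_pos]
      linarith
    · -- value
      have hval : ∀ k, q k * f (p k) = q k * f (phat k)
          + ((if k = i₀ then -(q k * glo k) else 0) + (if k = j₀ then q k * ghi k else 0)) := by
        intro k
        by_cases h1 : k = i₀
        · subst h1
          rw [hpi, if_pos rfl, if_neg hij]
          simp only [hglo]; ring
        · by_cases h2 : k = j₀
          · subst h2
            rw [hpj, if_neg h1, if_pos rfl]
            simp only [hghi]; ring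
          · rw [hpo k h1 h2, if_neg h1, if_neg h2]; ring
      simp only [hval, Finset.sum_add_distrib, Finset.sum_ite_eq', mem_univ, if_pos]
      rw [hx]
      simp only [hglo, hghi]; ring
  · -- lower bound
    rintro y ⟨p, ⟨⟨hp0, hp1⟩, hptv⟩, rfl⟩
    rw [dTV] at hptv
    set a : Fin d → ℝ := fun k => max (phat k - p k) 0 with ha
    set b : Fin d → ℝ := fun k => max (p k - phat k) 0 with hb
    have ha0 : ∀ k, 0 ≤ a k := fun k => le_max_right _ _
    have hb0 : ∀ k, 0 ≤ b k := fun k => le_max_right _ _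
    set s0 : ℝ := ∑ k, a k with hs0
    have hs00 : 0 ≤ s0 := Finset.sum_nonneg (fun k _ => ha0 k)
    have hsb : ∑ k, b k = s0 := by
      have h1 : ∑ k, (b k - a k) = 0 := by
        have h2 : ∀ k, b k - a k = p k - phat k := by
          intro k
          rcases le_total (p k) (phat k) with h | h
          · rw [hb, ha]
            simp only
            rw [max_eq_right (by linarith : p k - phat k ≤ 0),
              max_eq_left (by linarith : (0:ℝ) ≤ phat k - p k)]
            ring
          · rw [hb, ha]
            simp only
            rw [max_eq_left (by linarith : (0:ℝ) ≤ p k - phat k),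
              max_eq_right (by linarith : phat k - p k ≤ 0)]
            ring
        rw [Finset.sum_congr rfl (fun k _ => h2 k), Finset.sum_sub_distrib, hp1, hmem.2]
        ring
      rw [Finset.sum_sub_distrib] at h1
      rw [hs0]; linarith
    have hsε : s0 ≤ ε := by
      have h1 : ∀ k, a k + b k = |p k - phat k| := by
        intro k
        rcases le_total (p k) (phat k) with h | h
        · rw [hb, ha]
          simp only
          rw [max_eq_right (by linarith : p k - phat k ≤ 0),
            max_eq_left (by linarith : (0:ℝ) ≤ phat k - p k),
            abs_of_nonpos (by linarith : p k - phat k ≤ 0)]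
          ring
        · rw [hb, ha]
          simp only
          rw [max_eq_left (by linarith : (0:ℝ) ≤ p k - phat k),
            max_eq_right (by linarith : phat k - p k ≤ 0),
            abs_of_nonneg (by linarith : (0:ℝ) ≤ p k - phat k)]
          ring
      have h2 : ∑ k, (a k + b k) = ∑ k, |p k - phat k| :=
        Finset.sum_congr rfl (fun k _ => h1 k)
      rw [Finset.sum_add_distrib, hsb] at h2
      rw [hs0] at *
      linarith
    have haε : ∀ k, a k ≤ ε := fun k =>
      le_trans (Finset.single_le_sum (fun i _ => ha0 i) (mem_univ k)) hsε
    have hbε : ∀ k, b k ≤ ε := fun k =>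
      le_trans (le_trans (Finset.single_le_sum (fun i _ => hb0 i) (mem_univ k))
        (le_of_eq hsb)) hsε
    -- pointwise concavity bound
    have hkey : ∀ k, q k * f (phat k) - q k * f (p k)
        ≤ (a k * (q k * glo k) - b k * (q k * ghi k)) / ε := by
      intro k
      rcases le_total (p k) (phat k) with h | h
      · have hbk : b k = 0 := max_eq_right (by linarith)
        have hak : a k = phat k - p k := max_eq_left (by linarith)
        have hlam0 : 0 ≤ a k / ε := div_nonneg (ha0 k) hε.le
        have hlam1 : a k / ε ≤ 1 := (div_le_one hε).2 (haε k)
        have hc : (a k / ε) • f (phat k - ε) + (1 - a k / ε) • f (phat k)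
            ≤ f ((a k / ε) • (phat k - ε) + (1 - a k / ε) • phat k) :=
          hconc.2 (hmemlo k) (hmemmid k) hlam0 (by linarith) (by ring)
        simp only [smul_eq_mul] at hc
        have harg : a k / ε * (phat k - ε) + (1 - a k / ε) * phat k = p k := by
          have hcancel : a k / ε * ε = a k := div_mul_cancel₀ _ hε.ne'
          linarith [hcancel, hak]
        rw [harg] at hc
        have h5 : q k * f (phat k) - q k * f (p k) ≤ q k * (a k / ε * glo k) := by
          have h6 : f (phat k) - f (p k) ≤ a k / ε * glo k := by
            simp only [hglo]; linarith [hc]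
          have h8 := mul_le_mul_of_nonneg_left h6 (hq0 k)
          linarith [h8]
        have h7 : q k * (a k / ε * glo k)
            = (a k * (q k * glo k) - b k * (q k * ghi k)) / ε := by
          rw [hbk]; ring
        linarith
      · have hak : a k = 0 := max_eq_right (by linarith)
        have hbk : b k = p k - phat k := max_eq_left (by linarith)
        have hlam0 : 0 ≤ b k / ε := div_nonneg (hb0 k) hε.le
        have hlam1 : b k / ε ≤ 1 := (div_le_one hε).2 (hbε k)
        have hc : (b k / ε) • f (phat k + ε) + (1 - b k / ε) • f (phat k)
            ≤ f ((b k / ε) • (phat k + ε) + (1 - b k / ε) • phat k) :=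
          hconc.2 (hmemhi k) (hmemmid k) hlam0 (by linarith) (by ring)
        simp only [smul_eq_mul] at hc
        have harg : b k / ε * (phat k + ε) + (1 - b k / ε) * phat k = p k := by
          have hcancel : b k / ε * ε = b k := div_mul_cancel₀ _ hε.ne'
          linarith [hcancel, hbk]
        rw [harg] at hc
        have h5 : q k * f (phat k) - q k * f (p k) ≤ q k * (-(b k / ε * ghi k)) := by
          have h6 : f (phat k) - f (p k) ≤ -(b k / ε * ghi k) := by
            simp only [hghi]; linarith [hc]
          have h8 := mul_le_mul_of_nonneg_left h6 (hq0 k)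
          linarith [h8]
        have h7 : q k * (-(b k / ε * ghi k))
            = (a k * (q k * glo k) - b k * (q k * ghi k)) / ε := by
          rw [hak]; ring
        linarith
    set A : ℝ := ∑ k, a k * (q k * glo k) with hA
    set B : ℝ := ∑ k, b k * (q k * ghi k) with hB
    have hsum1 : ∑ k, (q k * f (phat k) - q k * f (p k)) ≤ (A - B) / ε := by
      calc ∑ k, (q k * f (phat k) - q k * f (p k))
          ≤ ∑ k, (a k * (q k * glo k) - b k * (q k * ghi k)) / ε :=
            Finset.sum_le_sum (fun k _ => hkey k)
        _ = (A - B) / ε := by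
            rw [← Finset.sum_div, Finset.sum_sub_distrib]
    -- A - B ≤ s0 * M
    have hterm : ∀ i j : Fin d,
        a i * b j * (q i * glo i) - a i * b j * (q j * ghi j) ≤ a i * b j * M := by
      intro i j
      rcases eq_or_lt_of_le (ha0 i) with h | h
      · rw [← h]; simp
      rcases eq_or_lt_of_le (hb0 j) with h' | h'
      · rw [← h']; simp
      have h1 : p i < phat i := by
        by_contra hcon
        push_neg at hcon
        have : a i = 0 := max_eq_right (by linarith)
        linarith
      have h2 : phat j < p j := by
        by_contra hcon
        push_neg at hcon
        have : b j = 0 := max_eq_right (by linarith)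
        linarith
      have hij : i ≠ j := by
        intro he; rw [he] at h1; linarith
      have h3 := mul_le_mul_of_nonneg_left (hMub i j hij)
        (mul_nonneg (ha0 i) (hb0 j))
      have h4 : a i * b j * (q i * glo i) - a i * b j * (q j * ghi j)
          = a i * b j * (q i * glo i - q j * ghi j) := by ring
      rw [h4]
      exact h3
    have hABs : A - B ≤ s0 * M := by
      have e1 : s0 * A = ∑ i, ∑ j, a i * b j * (q i * glo i) := by
        calc s0 * A = A * (∑ j, b j) := by rw [hsb]; ring
          _ = ∑ i, ∑ j, (a i * (q i * glo i)) * b j := Finset.sum_mul_sum _ _ _ _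
          _ = ∑ i, ∑ j, a i * b j * (q i * glo i) := by
              refine Finset.sum_congr rfl (fun i _ => Finset.sum_congr rfl (fun j _ => by ring))
      have e2 : s0 * B = ∑ i, ∑ j, a i * b j * (q j * ghi j) := by
        calc s0 * B = (∑ i, a i) * (∑ j, b j * (q j * ghi j)) := by rw [hs0]
          _ = ∑ i, ∑ j, a i * (b j * (q j * ghi j)) := Finset.sum_mul_sum _ _ _ _
          _ = ∑ i, ∑ j, a i * b j * (q j * ghi j) := by
              refine Finset.sum_congr rfl (fun i _ => Finset.sum_congr rfl (fun j _ => by ring))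
      have e3 : ∑ i, ∑ j, a i * b j * M = s0 * (s0 * M) := by
        calc ∑ i : Fin d, ∑ j : Fin d, a i * b j * M
            = ∑ i : Fin d, a i * ∑ j : Fin d, b j * M := by
              refine Finset.sum_congr rfl (fun i _ => ?_)
              rw [Finset.mul_sum]
              exact Finset.sum_congr rfl (fun j _ => by ring)
          _ = ∑ i : Fin d, a i * (s0 * M) := by
              refine Finset.sum_congr rfl (fun i _ => ?_)
              rw [← Finset.sum_mul, hsb]
          _ = s0 * (s0 * M) := by rw [← Finset.sum_mul, ← hs0]
      have e4 : s0 * A - s0 * B ≤ s0 * (s0 * M) := by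
        rw [e1, e2, ← e3, ← Finset.sum_sub_distrib]
        refine Finset.sum_le_sum (fun i _ => ?_)
        rw [← Finset.sum_sub_distrib]
        exact Finset.sum_le_sum (fun j _ => hterm i j)
      rcases eq_or_lt_of_le hs00 with hz | hz
      · -- s0 = 0 : A = 0 and B ≥ 0
        have hall : ∀ k ∈ univ, a k = 0 :=
          (Finset.sum_eq_zero_iff_of_nonneg (fun k _ => ha0 k)).1 (by rw [← hs0, ← hz])
        have hA0 : A = 0 := by
          rw [hA]
          exact Finset.sum_eq_zero (fun k hk => by rw [hall k hk]; ring)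
        have hB0 : 0 ≤ B := Finset.sum_nonneg (fun k _ =>
          mul_nonneg (hb0 k) (mul_nonneg (hq0 k) (hghi0 k)))
        rw [hA0, ← hz]
        simp
        linarith
      · have := le_of_mul_le_mul_left (by linarith [e4] : s0 * (A - B) ≤ s0 * (s0 * M)) hz
        exact this
    have hfin : (A - B) / ε ≤ M := by
      have h1 : A - B ≤ ε * M := le_trans hABs (by nlinarith [hM0, hsε])
      rw [div_le_iff₀ hε]
      linarith [h1]
    have hsplit : ∑ k, (q k * f (phat k) - q k * f (p k))
        = (∑ i, q i * f (phat i)) - ∑ i, q i * f (p i) := Finset.sum_sub_distrib _ _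
    linarith [hsum1, hfin, hsplit.symm.le, hsplit.le]
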